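/- The monoid of lattice points in the three-dimensional cone spanned by P_0 = (-1,1,2), P_1 = (1,-1,1), P_2 = (0,1,0), P_3 = (1,0,0) is not generated by any finite supernormal subset of itself. -/

import Mathlib

/-- `x ∈ ℝ^m` lies in the cone (nonnegative real span) of `B ⊆ ℤ^m`. -/
def ConeM {m : ℕ} (B : Set (Fin m → ℤ)) (x : Fin m → ℝ) : Prop :=
  ∃ (s : Finset (Fin m → ℤ)) (c : (Fin m → ℤ) → ℝ),
    ↑s ⊆ B ∧ (∀ b, 0 ≤ c b) ∧ ∀ i, x i = ∑ b ∈ s, c b * (b i : ℝ)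

/-- `z ∈ ℤ^m` is a nonnegative integer combination of elements of `B ⊆ ℤ^m`. -/
def NNCombM {m : ℕ} (B : Set (Fin m → ℤ)) (z : Fin m → ℤ) : Prop :=
  ∃ (s : Finset (Fin m → ℤ)) (c : (Fin m → ℤ) → ℕ),
    ↑s ⊆ B ∧ ∀ i, z i = ∑ b ∈ s, (c b : ℤ) * b i

/-- `B ⊆ ℤ^m` is supernormal if for every subset `B' ⊆ B` every lattice point of
`cone(B')` is a nonnegative integer combination of `B ∩ cone(B')`. -/
def SupernormalM {m : ℕ} (B : Set (Fin m → ℤ)) : Prop :=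
  ∀ B' ⊆ B, ∀ z : Fin m → ℤ, ConeM B' (fun i => (z i : ℝ)) →
    NNCombM {b ∈ B | ConeM B' (fun i => (b i : ℝ))} z

/-- `B ⊆ ℤ^m` is normal if every lattice point of `cone(B)` is a nonnegative
integer combination of `B`. -/
def NormalM {m : ℕ} (B : Set (Fin m → ℤ)) : Prop :=
  ∀ z : Fin m → ℤ, ConeM B (fun i => (z i : ℝ)) → NNCombM B z

lemma sn_facet (a b c : ℤ) {B' : Set (Fin 3 → ℤ)} {v : Fin 3 → ℤ}
    (hv : ConeM B' (fun i => (v i : ℝ)))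
    (h : ∀ u ∈ B', 0 ≤ a * u 0 + b * u 1 + c * u 2) :
    0 ≤ a * v 0 + b * v 1 + c * v 2 := by
  obtain ⟨s, co, hs, hco, hsum⟩ := hv
  have h0 : (v 0 : ℝ) = ∑ u ∈ s, co u * (u 0 : ℝ) := hsum 0
  have h1 : (v 1 : ℝ) = ∑ u ∈ s, co u * (u 1 : ℝ) := hsum 1
  have h2 : (v 2 : ℝ) = ∑ u ∈ s, co u * (u 2 : ℝ) := hsum 2
  have key : ((a * v 0 + b * v 1 + c * v 2 : ℤ) : ℝ)
      = ∑ u ∈ s, co u * ((a * u 0 + b * u 1 + c * u 2 : ℤ) : ℝ) := by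
    push_cast
    rw [h0, h1, h2, Finset.mul_sum, Finset.mul_sum, Finset.mul_sum,
      ← Finset.sum_add_distrib, ← Finset.sum_add_distrib]
    exact Finset.sum_congr rfl fun u _ => by push_cast; ring
  have hnn : (0:ℝ) ≤ ((a * v 0 + b * v 1 + c * v 2 : ℤ) : ℝ) := by
    rw [key]
    refine Finset.sum_nonneg fun u hu => mul_nonneg (hco u) ?_
    exact_mod_cast h u (hs hu)
  exact_mod_cast hnn

lemma sn_Qsmul {Q : (Fin 3 → ℤ) → Prop} (hQ0 : Q 0)
    (hQadd : ∀ u v, Q u → Q v → Q (u + v)) :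
    ∀ (n : ℕ) (u : Fin 3 → ℤ), Q u → Q ((n : ℤ) • u) := by
  intro n
  induction n with
  | zero => intro u hu; simpa using hQ0
  | succ m ih =>
      intro u hu
      have h2 := hQadd u ((m : ℤ) • u) hu (ih u hu)
      have : ((m + 1 : ℕ) : ℤ) • u = u + (m : ℤ) • u := by
        push_cast; rw [add_smul, one_smul]; abel
      rwa [this]

lemma sn_atom_mem {Q : (Fin 3 → ℤ) → Prop} (hQ0 : Q 0)
    (hQadd : ∀ u v, Q u → Q v → Q (u + v))
    {z : Fin 3 → ℤ} (hz0 : z ≠ 0)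
    (hatom : ∀ u v, Q u → Q v → z = u + v → u = 0 ∨ v = 0) :
    ∀ (N : ℕ) (s : Finset (Fin 3 → ℤ)) (c : (Fin 3 → ℤ) → ℕ),
      (∑ b ∈ s, c b = N) → (∀ b ∈ s, Q b) →
      (∀ i, z i = ∑ b ∈ s, (c b : ℤ) * b i) → z ∈ s := by
  intro N
  induction N with
  | zero =>
      intro s c hN hb hsum
      exfalso
      apply hz0
      funext i
      rw [hsum i]
      have : ∀ b ∈ s, (c b : ℤ) * b i = 0 := by
        intro b hbs
        have : c b = 0 := by
          have := (Finset.sum_eq_zero_iff).mp hN b hbs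
          exact this
        simp [this]
      simp [Finset.sum_eq_zero this]
  | succ n ih =>
      intro s c hN hb hsum
      have hex : ∃ b0 ∈ s, c b0 ≠ 0 := by
        by_contra hc
        push_neg at hc
        have : ∑ b ∈ s, c b = 0 := Finset.sum_eq_zero hc
        omega
      obtain ⟨b0, hb0s, hb0⟩ := hex
      obtain ⟨c', hcb0, hcother⟩ :
          ∃ c' : (Fin 3 → ℤ) → ℕ, c' b0 = c b0 - 1 ∧ ∀ b, b ≠ b0 → c' b = c b :=
        ⟨Function.update c b0 (c b0 - 1), Function.update_self _ _ _,
          fun b hbne => Function.update_of_ne hbne _ _⟩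
      obtain ⟨w, hwdef⟩ : ∃ w : Fin 3 → ℤ, w = fun i => ∑ b ∈ s, (c' b : ℤ) * b i :=
        ⟨_, rfl⟩
      have hwi : ∀ i, w i = ∑ b ∈ s, (c' b : ℤ) * b i := fun i => by rw [hwdef]
      have claim1 : ∀ i, z i = b0 i + w i := by
        intro i
        rw [hsum i, hwi i]
        rw [← Finset.add_sum_erase _ _ hb0s,
          ← Finset.add_sum_erase _ (fun b => (c' b : ℤ) * b i) hb0s]
        have hrest : ∑ b ∈ s.erase b0, (c' b : ℤ) * b i
            = ∑ b ∈ s.erase b0, (c b : ℤ) * b i :=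
          Finset.sum_congr rfl fun b hbe => by
            rw [hcother b (Finset.ne_of_mem_erase hbe)]
        rw [hrest, hcb0]
        have hcast : (c b0 : ℤ) = ((c b0 - 1 : ℕ) : ℤ) + 1 := by
          have hone : 1 ≤ c b0 := Nat.one_le_iff_ne_zero.mpr hb0
          have := Nat.sub_add_cancel hone
          exact_mod_cast this.symm
        rw [hcast]; ring
      have claim2 : ∑ b ∈ s, c' b = n := by
        have e1 : c' b0 + ∑ b ∈ s.erase b0, c' b = ∑ b ∈ s, c' b :=
          Finset.add_sum_erase _ _ hb0s
        have e2 : c b0 + ∑ b ∈ s.erase b0, c b = ∑ b ∈ s, c b :=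
          Finset.add_sum_erase _ _ hb0s
        have e3 : ∑ b ∈ s.erase b0, c' b = ∑ b ∈ s.erase b0, c b :=
          Finset.sum_congr rfl fun b hbe => by
            rw [hcother b (Finset.ne_of_mem_erase hbe)]
        have hone : 1 ≤ c b0 := Nat.one_le_iff_ne_zero.mpr hb0
        omega
      have hQw : Q w := by
        have hwsum : w = ∑ b ∈ s, ((c' b : ℤ) • b) := by
          funext i
          rw [hwi i, Finset.sum_apply]
          exact Finset.sum_congr rfl fun b _ => by simp
        rw [hwsum]
        exact Finset.sum_induction _ Q hQadd hQ0 fun b hbs =>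
          sn_Qsmul hQ0 hQadd (c' b) b (hb b hbs)
      have hzeq : z = b0 + w := funext fun i => by rw [claim1 i]; rfl
      rcases hatom b0 w (hb b0 hb0s) hQw hzeq with h0 | h0
      · exact ih s c' claim2 hb fun i => by
          rw [claim1 i, h0, hwi i]; simp
      · have : z = b0 := by
          funext i
          rw [claim1 i, h0]
          simp
        rw [this]; exact hb0s

lemma sn_force {Q : (Fin 3 → ℤ) → Prop} (hQ0 : Q 0)
    (hQadd : ∀ u v, Q u → Q v → Q (u + v))
    {z : Fin 3 → ℤ} (hz0 : z ≠ 0)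
    (hatom : ∀ u v, Q u → Q v → z = u + v → u = 0 ∨ v = 0)
    {S : Set (Fin 3 → ℤ)} (hS : ∀ b ∈ S, Q b) (h : NNCombM S z) : z ∈ S := by
  obtain ⟨s, c, hs, hsum⟩ := h
  exact hs (sn_atom_mem hQ0 hQadd hz0 hatom _ s c rfl (fun b hb => hS b (hs hb)) hsum)

lemma sn_stepA (k : ℤ) (hk : 0 ≤ k) {B : Finset (Fin 3 → ℤ)}
    (hsup : SupernormalM (↑B : Set (Fin 3 → ℤ)))
    (h1 : ![1,-1,1] ∈ B) (h2 : ![1,0,0] ∈ B) (h3 : ![0,1,k] ∈ B) :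
    ![1,0,k] ∈ B := by
  have hk1 : (0:ℤ) < k + 1 := by linarith
  set B' : Set (Fin 3 → ℤ) := {![1,-1,1], ![1,0,0], ![0,1,k]} with hB'
  have hB'B : B' ⊆ (↑B : Set (Fin 3 → ℤ)) := by
    intro x hx
    simp only [hB', Set.mem_insert_iff, Set.mem_singleton_iff] at hx
    rcases hx with rfl | rfl | rfl <;> simpa
  -- disequalities
  have hne12 : (![1,-1,1] : Fin 3 → ℤ) ≠ ![1,0,0] := by
    intro h; have := congrFun h 1; norm_num at this
  have hne13 : (![1,-1,1] : Fin 3 → ℤ) ≠ ![0,1,k] := by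
    intro h; have := congrFun h 0; norm_num at this
  have hne23 : (![1,0,0] : Fin 3 → ℤ) ≠ ![0,1,k] := by
    intro h; have := congrFun h 0; norm_num at this
  have hkR : (0:ℝ) ≤ (k:ℝ) := by exact_mod_cast hk
  have hkR1 : (0:ℝ) < (k:ℝ) + 1 := by linarith
  have hzc : ConeM B' (fun i => ((![1,0,k] : Fin 3 → ℤ) i : ℝ)) := by
    refine ⟨{![1,-1,1], ![1,0,0], ![0,1,k]},
      fun u => if u = ![1,-1,1] then (k:ℝ)/(k+1) else
        if u = ![1,0,0] then 1/((k:ℝ)+1) else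
        if u = ![0,1,k] then (k:ℝ)/(k+1) else 0, ?_, ?_, ?_⟩
    · intro x hx
      simp only [Finset.coe_insert, Finset.coe_singleton] at hx
      exact hx
    · intro bb
      dsimp only
      split_ifs <;> positivity
    · intro i
      have hm1 : (![1,-1,1] : Fin 3 → ℤ) ∉ ({![1,0,0], ![0,1,k]} : Finset (Fin 3 → ℤ)) := by
        simp [hne12, hne13]
      have hm2 : (![1,0,0] : Fin 3 → ℤ) ∉ ({![0,1,k]} : Finset (Fin 3 → ℤ)) := by
        simp [hne23]
      rw [Finset.sum_insert hm1, Finset.sum_insert hm2, Finset.sum_singleton]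
      dsimp only
      rw [if_pos rfl, if_neg (Ne.symm hne12), if_pos rfl,
        if_neg (Ne.symm hne13), if_neg (Ne.symm hne23), if_pos rfl]
      have hne0 : (k:ℝ) + 1 ≠ 0 := ne_of_gt hkR1
      fin_cases i <;>
        simp [Matrix.cons_val_zero, Matrix.cons_val_one, Matrix.head_cons] <;>
        field_simp <;> ring
  have hnn := hsup B' hB'B ![1,0,k] hzc
  -- the monoid Q of integer points of cone(B')
  set Q : (Fin 3 → ℤ) → Prop := fun u =>
    0 ≤ u 1 + u 2 ∧ 0 ≤ (k+1) * u 0 + k * u 1 - u 2 ∧ k * u 1 ≤ u 2 with hQ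
  have hQ0 : Q 0 := by simp [hQ]
  have hQadd : ∀ u v, Q u → Q v → Q (u + v) := by
    rintro u v ⟨a1, a2, a3⟩ ⟨b1, b2, b3⟩
    refine ⟨?_, ?_, ?_⟩ <;> simp only [Pi.add_apply] <;> ring_nf <;> nlinarith [a1, a2, a3, b1, b2, b3]
  have hz0 : (![1,0,k] : Fin 3 → ℤ) ≠ 0 := by
    intro h; have := congrFun h 0; norm_num at this
  have hatom : ∀ u v, Q u → Q v → (![1,0,k] : Fin 3 → ℤ) = u + v → u = 0 ∨ v = 0 := by
    have aux : ∀ u v : Fin 3 → ℤ, Q u → Q v →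
        u 0 + v 0 = 1 → u 1 + v 1 = 0 → u 2 + v 2 = k → u 0 ≤ 0 → u = 0 := by
      rintro u v ⟨a1, a2, a3⟩ ⟨b1, b2, b3⟩ e0 e1 e2 h0
      have hnp : (k+1) * u 0 ≤ 0 := by
        have := mul_le_mul_of_nonneg_left h0 (le_of_lt hk1)
        simpa using this
      have hu2 : u 2 = k * u 1 := by nlinarith
      have hzero : (k+1) * u 0 = 0 := by nlinarith
      have h00 : u 0 = 0 := by
        rcases mul_eq_zero.mp hzero with h | h
        · exfalso; omega
        · exact h
      have h1nn : 0 ≤ u 1 := by nlinarith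
      rcases eq_or_lt_of_le h1nn with h1z | h1pos
      · funext i
        fin_cases i
        · exact h00
        · exact h1z.symm
        · show u 2 = 0
          rw [hu2, ← h1z]; ring
      · exfalso
        have hu1 : 1 ≤ u 1 := h1pos
        have hv1 : v 1 = -u 1 := by linarith
        have hv2 : v 2 = k - k * u 1 := by rw [hu2] at e2; linarith
        have : 0 ≤ k * (u 1 - 1) := mul_nonneg hk (by linarith)
        nlinarith [b1]
    intro u v hu hv heq
    have e0 : u 0 + v 0 = 1 := by
      have := congrFun heq 0; simp at this; linarith [this]
    have e1 : u 1 + v 1 = 0 := by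
      have := congrFun heq 1; simp at this; linarith [this]
    have e2 : u 2 + v 2 = k := by
      have := congrFun heq 2; simp at this; linarith [this]
    by_cases h0 : u 0 ≤ 0
    · exact Or.inl (aux u v hu hv e0 e1 e2 h0)
    · refine Or.inr (aux v u hv hu (by linarith) (by linarith) (by linarith) (by linarith))
  have hS : ∀ b ∈ {b ∈ (↑B : Set (Fin 3 → ℤ)) | ConeM B' (fun i => (b i : ℝ))}, Q b := by
    rintro b ⟨-, hbc⟩
    have hgen : ∀ n0 n1 n2 : ℤ,
        (0 ≤ n0 * 1 + n1 * (-1) + n2 * 1) → (0 ≤ n0 * 1) → (0 ≤ n1 * 1 + n2 * k) →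
        0 ≤ n0 * b 0 + n1 * b 1 + n2 * b 2 := by
      intro n0 n1 n2 g1 g2 g3
      refine sn_facet n0 n1 n2 hbc ?_
      intro u hu
      simp only [hB', Set.mem_insert_iff, Set.mem_singleton_iff] at hu
      rcases hu with rfl | rfl | rfl <;> (simp; try linarith)
    refine ⟨?_, ?_, ?_⟩
    · have := hgen 0 1 1 (by linarith) (by linarith) (by linarith)
      linarith
    · have := hgen (k+1) k (-1) (by linarith) (by linarith) (by linarith)
      linarith
    · have := hgen 0 (-k) 1 (by linarith) (by linarith) (by linarith)
      linarith
  have hmem := sn_force hQ0 hQadd hz0 hatom hS hnn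
  exact hmem.1

lemma sn_stepB (k : ℤ) (hk : 0 ≤ k) {B : Finset (Fin 3 → ℤ)}
    (hsup : SupernormalM (↑B : Set (Fin 3 → ℤ)))
    (h1 : ![-1,1,2] ∈ B) (h2 : ![0,1,0] ∈ B) (h3 : ![1,0,k] ∈ B) :
    ![0,1,k+1] ∈ B := by
  have hk1 : (0:ℤ) < k + 2 := by linarith
  set B' : Set (Fin 3 → ℤ) := {![-1,1,2], ![0,1,0], ![1,0,k]} with hB'
  have hB'B : B' ⊆ (↑B : Set (Fin 3 → ℤ)) := by
    intro x hx
    simp only [hB', Set.mem_insert_iff, Set.mem_singleton_iff] at hx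
    rcases hx with rfl | rfl | rfl <;> simpa
  have hne12 : (![-1,1,2] : Fin 3 → ℤ) ≠ ![0,1,0] := by
    intro h; have := congrFun h 0; norm_num at this
  have hne13 : (![-1,1,2] : Fin 3 → ℤ) ≠ ![1,0,k] := by
    intro h; have := congrFun h 0; norm_num at this
  have hne23 : (![0,1,0] : Fin 3 → ℤ) ≠ ![1,0,k] := by
    intro h; have := congrFun h 0; norm_num at this
  have hkR : (0:ℝ) ≤ (k:ℝ) := by exact_mod_cast hk
  have hkR1 : (0:ℝ) < (k:ℝ) + 2 := by linarith
  have hzc : ConeM B' (fun i => ((![0,1,k+1] : Fin 3 → ℤ) i : ℝ)) := by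
    refine ⟨{![-1,1,2], ![0,1,0], ![1,0,k]},
      fun u => if u = ![-1,1,2] then ((k:ℝ)+1)/(k+2) else
        if u = ![0,1,0] then 1/((k:ℝ)+2) else
        if u = ![1,0,k] then ((k:ℝ)+1)/(k+2) else 0, ?_, ?_, ?_⟩
    · intro x hx
      simp only [Finset.coe_insert, Finset.coe_singleton] at hx
      exact hx
    · intro bb
      dsimp only
      split_ifs <;> positivity
    · intro i
      have hm1 : (![-1,1,2] : Fin 3 → ℤ) ∉ ({![0,1,0], ![1,0,k]} : Finset (Fin 3 → ℤ)) := by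
        simp [hne12, hne13]
      have hm2 : (![0,1,0] : Fin 3 → ℤ) ∉ ({![1,0,k]} : Finset (Fin 3 → ℤ)) := by
        simp [hne23]
      rw [Finset.sum_insert hm1, Finset.sum_insert hm2, Finset.sum_singleton]
      dsimp only
      rw [if_pos rfl, if_neg (Ne.symm hne12), if_pos rfl,
        if_neg (Ne.symm hne13), if_neg (Ne.symm hne23), if_pos rfl]
      have hne0 : (k:ℝ) + 2 ≠ 0 := ne_of_gt hkR1
      fin_cases i <;>
        simp [Matrix.cons_val_zero, Matrix.cons_val_one, Matrix.head_cons] <;>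
        field_simp <;> ring
  have hnn := hsup B' hB'B ![0,1,k+1] hzc
  set Q : (Fin 3 → ℤ) → Prop := fun u =>
    0 ≤ 2 * u 0 + u 2 ∧ 0 ≤ k * u 0 + (k+2) * u 1 - u 2 ∧ k * u 0 ≤ u 2 with hQ
  have hQ0 : Q 0 := by simp [hQ]
  have hQadd : ∀ u v, Q u → Q v → Q (u + v) := by
    rintro u v ⟨a1, a2, a3⟩ ⟨b1, b2, b3⟩
    refine ⟨?_, ?_, ?_⟩ <;> simp only [Pi.add_apply] <;> ring_nf <;>
      nlinarith [a1, a2, a3, b1, b2, b3]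
  have hz0 : (![0,1,k+1] : Fin 3 → ℤ) ≠ 0 := by
    intro h; have := congrFun h 1; norm_num at this
  have hatom : ∀ u v, Q u → Q v → (![0,1,k+1] : Fin 3 → ℤ) = u + v → u = 0 ∨ v = 0 := by
    have aux : ∀ u v : Fin 3 → ℤ, Q u → Q v →
        u 0 + v 0 = 0 → u 1 + v 1 = 1 → u 2 + v 2 = k + 1 → u 1 ≤ 0 → u = 0 := by
      rintro u v ⟨a1, a2, a3⟩ ⟨b1, b2, b3⟩ e0 e1 e2 h0
      have hnp : (k+2) * u 1 ≤ 0 := by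
        have := mul_le_mul_of_nonneg_left h0 (le_of_lt hk1)
        simpa using this
      have hu2 : u 2 = k * u 0 := by nlinarith
      have hzero : (k+2) * u 1 = 0 := by nlinarith
      have h11 : u 1 = 0 := by
        rcases mul_eq_zero.mp hzero with h | h
        · exfalso; omega
        · exact h
      have h0nn : 0 ≤ u 0 := by nlinarith
      rcases eq_or_lt_of_le h0nn with h0z | h0pos
      · funext i
        fin_cases i
        · exact h0z.symm
        · exact h11
        · show u 2 = 0
          rw [hu2, ← h0z]; ring
      · exfalso
        have hu0 : 1 ≤ u 0 := h0pos
        have hv0 : v 0 = -u 0 := by linarith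
        have hv2 : v 2 = k + 1 - k * u 0 := by rw [hu2] at e2; linarith
        have : 0 ≤ k * (u 0 - 1) := mul_nonneg hk (by linarith)
        nlinarith [b1]
    intro u v hu hv heq
    have e0 : u 0 + v 0 = 0 := by
      have := congrFun heq 0; simp at this; linarith [this]
    have e1 : u 1 + v 1 = 1 := by
      have := congrFun heq 1; simp at this; linarith [this]
    have e2 : u 2 + v 2 = k + 1 := by
      have := congrFun heq 2; simp at this; linarith [this]
    by_cases h0 : u 1 ≤ 0
    · exact Or.inl (aux u v hu hv e0 e1 e2 h0)
    · refine Or.inr (aux v u hv hu (by linarith) (by linarith) (by linarith) (by linarith))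
  have hS : ∀ b ∈ {b ∈ (↑B : Set (Fin 3 → ℤ)) | ConeM B' (fun i => (b i : ℝ))}, Q b := by
    rintro b ⟨-, hbc⟩
    have hgen : ∀ n0 n1 n2 : ℤ,
        (0 ≤ n0 * (-1) + n1 * 1 + n2 * 2) → (0 ≤ n1 * 1) → (0 ≤ n0 * 1 + n2 * k) →
        0 ≤ n0 * b 0 + n1 * b 1 + n2 * b 2 := by
      intro n0 n1 n2 g1 g2 g3
      refine sn_facet n0 n1 n2 hbc ?_
      intro u hu
      simp only [hB', Set.mem_insert_iff, Set.mem_singleton_iff] at hu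
      rcases hu with rfl | rfl | rfl <;> (simp; try linarith)
    refine ⟨?_, ?_, ?_⟩
    · have := hgen 2 0 1 (by linarith) (by linarith) (by linarith)
      linarith
    · have := hgen k (k+2) (-1) (by linarith) (by linarith) (by linarith)
      linarith
    · have := hgen (-k) 0 1 (by linarith) (by linarith) (by linarith)
      linarith
  have hmem := sn_force hQ0 hQadd hz0 hatom hS hnn
  exact hmem.1

lemma sn_base {B : Finset (Fin 3 → ℤ)}
    (hBcone : ∀ b ∈ B, ConeM ({![-1,1,2], ![1,-1,1], ![0,1,0], ![1,0,0]} : Set (Fin 3 → ℤ))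
      (fun i => (b i : ℝ)))
    (hBgen : ∀ z : Fin 3 → ℤ,
      ConeM ({![-1,1,2], ![1,-1,1], ![0,1,0], ![1,0,0]} : Set (Fin 3 → ℤ)) (fun i => (z i : ℝ)) →
      NNCombM (↑B : Set (Fin 3 → ℤ)) z) :
    ![0,1,0] ∈ B ∧ ![1,0,0] ∈ B ∧ ![1,-1,1] ∈ B ∧ ![-1,1,2] ∈ B := by
  set P : Set (Fin 3 → ℤ) := {![-1,1,2], ![1,-1,1], ![0,1,0], ![1,0,0]} with hP
  set Q : (Fin 3 → ℤ) → Prop := fun u =>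
    0 ≤ u 0 + u 1 ∧ 0 ≤ 2 * u 0 + u 2 ∧ 0 ≤ u 2 ∧ 0 ≤ u 1 + u 2 with hQ
  have hQ0 : Q 0 := by simp [hQ]
  have hQadd : ∀ u v, Q u → Q v → Q (u + v) := by
    rintro u v ⟨a1, a2, a3, a4⟩ ⟨b1, b2, b3, b4⟩
    refine ⟨?_, ?_, ?_, ?_⟩ <;> simp only [Pi.add_apply] <;> linarith
  have hS : ∀ b ∈ (↑B : Set (Fin 3 → ℤ)), Q b := by
    intro b hb
    have hbc := hBcone b hb
    have hgen : ∀ n0 n1 n2 : ℤ,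
        (0 ≤ n0 * (-1) + n1 * 1 + n2 * 2) → (0 ≤ n0 * 1 + n1 * (-1) + n2 * 1) →
        (0 ≤ n1 * 1) → (0 ≤ n0 * 1) →
        0 ≤ n0 * b 0 + n1 * b 1 + n2 * b 2 := by
      intro n0 n1 n2 g1 g2 g3 g4
      refine sn_facet n0 n1 n2 hbc ?_
      intro u hu
      simp only [hP, Set.mem_insert_iff, Set.mem_singleton_iff] at hu
      rcases hu with rfl | rfl | rfl | rfl <;> (simp; try linarith)
    refine ⟨?_, ?_, ?_, ?_⟩
    · have := hgen 1 1 0 (by linarith) (by linarith) (by linarith) (by linarith)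
      linarith
    · have := hgen 2 0 1 (by linarith) (by linarith) (by linarith) (by linarith)
      linarith
    · have := hgen 0 0 1 (by linarith) (by linarith) (by linarith) (by linarith)
      linarith
    · have := hgen 0 1 1 (by linarith) (by linarith) (by linarith) (by linarith)
      linarith
  have hconeP : ∀ v ∈ P, ConeM P (fun i => (v i : ℝ)) := by
    intro v hv
    exact ⟨{v}, fun _ => 1, by simpa, fun _ => zero_le_one, fun i => by simp⟩
  have key : ∀ z : Fin 3 → ℤ, z ∈ P → z ≠ 0 →
      (∀ u v : Fin 3 → ℤ, Q u → Q v → z = u + v → u = 0 ∨ v = 0) → z ∈ B := by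
    intro z hzP hz0 hatom
    have hnn := hBgen z (hconeP z hzP)
    exact sn_force hQ0 hQadd hz0 hatom hS hnn
  have coords : ∀ u v : Fin 3 → ℤ, ∀ z : Fin 3 → ℤ, z = u + v →
      (u 0 + v 0 = z 0 ∧ u 1 + v 1 = z 1 ∧ u 2 + v 2 = z 2) := by
    intro u v z h
    refine ⟨?_, ?_, ?_⟩ <;>
      [have := congrFun h 0; have := congrFun h 1; have := congrFun h 2] <;>
      simp at this <;> linarith [this]
  have zeq : ∀ u : Fin 3 → ℤ, u 0 = 0 → u 1 = 0 → u 2 = 0 → u = 0 := by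
    intro u h0 h1 h2
    funext i
    fin_cases i
    · exact h0
    · exact h1
    · exact h2
  refine ⟨?_, ?_, ?_, ?_⟩
  · refine key ![0,1,0] (by simp [hP]) (fun h => by have := congrFun h 1; norm_num at this) ?_
    rintro u v ⟨a1, a2, a3, a4⟩ ⟨b1, b2, b3, b4⟩ heq
    obtain ⟨e0, e1, e2⟩ := coords u v _ heq
    simp at e0 e1 e2
    rcases (by omega : (u 0 = 0 ∧ u 1 = 0 ∧ u 2 = 0) ∨ (v 0 = 0 ∧ v 1 = 0 ∧ v 2 = 0)) with
      ⟨c0, c1, c2⟩ | ⟨c0, c1, c2⟩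
    · exact Or.inl (zeq u c0 c1 c2)
    · exact Or.inr (zeq v c0 c1 c2)
  · refine key ![1,0,0] (by simp [hP]) (fun h => by have := congrFun h 0; norm_num at this) ?_
    rintro u v ⟨a1, a2, a3, a4⟩ ⟨b1, b2, b3, b4⟩ heq
    obtain ⟨e0, e1, e2⟩ := coords u v _ heq
    simp at e0 e1 e2
    rcases (by omega : (u 0 = 0 ∧ u 1 = 0 ∧ u 2 = 0) ∨ (v 0 = 0 ∧ v 1 = 0 ∧ v 2 = 0)) with
      ⟨c0, c1, c2⟩ | ⟨c0, c1, c2⟩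
    · exact Or.inl (zeq u c0 c1 c2)
    · exact Or.inr (zeq v c0 c1 c2)
  · refine key ![1,-1,1] (by simp [hP]) (fun h => by have := congrFun h 0; norm_num at this) ?_
    rintro u v ⟨a1, a2, a3, a4⟩ ⟨b1, b2, b3, b4⟩ heq
    obtain ⟨e0, e1, e2⟩ := coords u v _ heq
    simp at e0 e1 e2
    rcases (by omega : (u 0 = 0 ∧ u 1 = 0 ∧ u 2 = 0) ∨ (v 0 = 0 ∧ v 1 = 0 ∧ v 2 = 0)) with
      ⟨c0, c1, c2⟩ | ⟨c0, c1, c2⟩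
    · exact Or.inl (zeq u c0 c1 c2)
    · exact Or.inr (zeq v c0 c1 c2)
  · refine key ![-1,1,2] (by simp [hP]) (fun h => by have := congrFun h 0; norm_num at this) ?_
    rintro u v ⟨a1, a2, a3, a4⟩ ⟨b1, b2, b3, b4⟩ heq
    obtain ⟨e0, e1, e2⟩ := coords u v _ heq
    simp at e0 e1 e2
    rcases (by omega : (u 0 = 0 ∧ u 1 = 0 ∧ u 2 = 0) ∨ (v 0 = 0 ∧ v 1 = 0 ∧ v 2 = 0)) with
      ⟨c0, c1, c2⟩ | ⟨c0, c1, c2⟩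
    · exact Or.inl (zeq u c0 c1 c2)
    · exact Or.inr (zeq v c0 c1 c2)


/-- The monoid of lattice points of the cone spanned by
`P₀=(-1,1,2), P₁=(1,-1,1), P₂=(0,1,0), P₃=(1,0,0)` is not generated by any finite
supernormal subset of itself. -/
theorem stmt10 :
    ¬ ∃ B : Finset (Fin 3 → ℤ),
      (∀ b ∈ B, ConeM ({![-1,1,2], ![1,-1,1], ![0,1,0], ![1,0,0]} : Set (Fin 3 → ℤ))
        (fun i => (b i : ℝ))) ∧
      SupernormalM (↑B : Set (Fin 3 → ℤ)) ∧
      (∀ z : Fin 3 → ℤ,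
        ConeM ({![-1,1,2], ![1,-1,1], ![0,1,0], ![1,0,0]} : Set (Fin 3 → ℤ)) (fun i => (z i : ℝ)) →
        NNCombM ↑B z) := by
  rintro ⟨B, hBcone, hBsup, hBgen⟩
  obtain ⟨h010, h100, h111, h112⟩ := sn_base hBcone hBgen
  have main : ∀ n : ℕ, ![0,1,(n:ℤ)] ∈ B := by
    intro n
    induction n with
    | zero => simpa using h010
    | succ m ih =>
        have hA := sn_stepA (m:ℤ) (by positivity) hBsup h111 h100 ih
        have hB := sn_stepB (m:ℤ) (by positivity) hBsup h112 h010 hA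
        have : ((m:ℤ) + 1) = ((m+1 : ℕ) : ℤ) := by push_cast; ring
        rwa [this] at hB
  have hinj : Function.Injective (fun n : ℕ => (![0,1,(n:ℤ)] : Fin 3 → ℤ)) := by
    intro a b h
    have := congrFun h 2
    simp at this
    exact_mod_cast this
  have hinf : (↑B : Set (Fin 3 → ℤ)).Infinite :=
    Set.infinite_of_injective_forall_mem hinj main
  exact hinf B.finite_toSet
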